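/- Let φ be an agreeable rule with agreeable selection S. For every agent i and preference Rᵢ, the option set satisfies: Oᶠ(Rᵢ) = {t(Rᵢ), Ω/n} if t(Rᵢ) ≤ Ω, and Oᶠ(Rᵢ) = {Ω/n} if t(Rᵢ) > Ω. -/

import Mathlib

open Finset

/-- A preference: a total preorder on ℝ₊ with a unique global maximum (peak). -/
structure Pref where
  R : ℝ → ℝ → Prop
  total : ∀ x y : ℝ, 0 ≤ x → 0 ≤ y → R x y ∨ R y x
  trans : ∀ x y z : ℝ, R x y → R y z → R x z
  peak : ℝ
  peak_nonneg : 0 ≤ peak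
  peak_max : ∀ x : ℝ, 0 ≤ x → R peak x
  peak_unique : ∀ x : ℝ, 0 ≤ x → R x peak → x = peak

/-- Strict preference. -/
def Pref.P (r : Pref) (x y : ℝ) : Prop := r.R x y ∧ ¬ r.R y x

variable {n : ℕ}

/-- Feasible allotments: nonnegative, summing to the social endowment Ω. -/
def Feasible (Ω : ℝ) (x : Fin n → ℝ) : Prop :=
  (∀ i, 0 ≤ x i) ∧ ∑ i, x i = Ω

/-- Efficiency (Pareto optimality) of a rule. -/
def Efficient (Ω : ℝ) (φ : (Fin n → Pref) → Fin n → ℝ) : Prop :=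
  ∀ R : Fin n → Pref, ¬ ∃ x : Fin n → ℝ, Feasible Ω x ∧
    (∀ i, (R i).R (x i) (φ R i)) ∧ (∃ i, (R i).P (x i) (φ R i))

/-- Strategy-proofness. -/
def StrategyProof (φ : (Fin n → Pref) → Fin n → ℝ) : Prop :=
  ∀ (R : Fin n → Pref) (i : Fin n) (Ri' : Pref),
    (R i).R (φ R i) (φ (Function.update R i Ri') i)

/-- Own-peak-onliness. -/
def OwnPeakOnly (φ : (Fin n → Pref) → Fin n → ℝ) : Prop :=
  ∀ (R : Fin n → Pref) (i : Fin n) (Ri' : Pref),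
    Ri'.peak = (R i).peak → φ (Function.update R i Ri') i = φ R i

/-- Option set of agent `i` with preference `Ri` at rule `φ`. -/
def OptionSet (φ : (Fin n → Pref) → Fin n → ℝ) (i : Fin n) (Ri : Pref) : Set ℝ :=
  {x | ∃ R : Fin n → Pref, R i = Ri ∧ φ R i = x}

/-- `Ri'` is a manipulation of `φ` at `Ri` (for agent `i`). -/
def Manipulation (φ : (Fin n → Pref) → Fin n → ℝ) (i : Fin n) (Ri Ri' : Pref) : Prop :=
  ∃ R : Fin n → Pref, R i = Ri ∧ Ri.P (φ (Function.update R i Ri') i) (φ R i)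

/-- `Ri'` is an obvious manipulation of `φ` at `Ri`. -/
def ObviousManipulation (φ : (Fin n → Pref) → Fin n → ℝ) (i : Fin n) (Ri Ri' : Pref) : Prop :=
  Manipulation φ i Ri Ri' ∧
  ∀ x' ∈ OptionSet φ i Ri', ∃ x ∈ OptionSet φ i Ri, Ri.P x' x

/-- Non-obvious manipulability. -/
def NonObviouslyManipulable (φ : (Fin n → Pref) → Fin n → ℝ) : Prop :=
  ∀ (i : Fin n) (Ri Ri' : Pref), ¬ ObviousManipulation φ i Ri Ri'

/-- Equal division lower bound. -/
def EqualDivisionLowerBound (Ω : ℝ) (φ : (Fin n → Pref) → Fin n → ℝ) : Prop :=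
  ∀ (R : Fin n → Pref) (i : Fin n), (R i).R (φ R i) (Ω / n)

/-- Equal division guarantee. -/
def EqualDivisionGuarantee (Ω : ℝ) (φ : (Fin n → Pref) → Fin n → ℝ) : Prop :=
  ∀ (R : Fin n → Pref) (i : Fin n), (R i).peak = Ω / n → φ R i = Ω / n

/-- Unanimity. -/
def Unanimity (Ω : ℝ) (φ : (Fin n → Pref) → Fin n → ℝ) : Prop :=
  ∀ R : Fin n → Pref, ∑ i, (R i).peak = Ω → ∀ i, φ R i = (R i).peak

/-- Non-bossiness. -/
def NonBossy (φ : (Fin n → Pref) → Fin n → ℝ) : Prop :=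
  ∀ (R : Fin n → Pref) (i : Fin n) (Ri' : Pref),
    φ (Function.update R i Ri') i = φ R i → φ (Function.update R i Ri') = φ R

/-- `S` is an agreeable coalition for profile `R`. -/
def AgreeableCoalition (Ω : ℝ) (R : Fin n → Pref) (S : Finset (Fin n)) : Prop :=
  ∑ j ∈ S, (R j).peak = (S.card : ℝ) / n * Ω

/-- An agreeable selection. -/
def AgreeableSelection (Ω : ℝ) (S : (Fin n → Pref) → Finset (Fin n)) : Prop :=
  (∀ R, AgreeableCoalition Ω R (S R)) ∧
  (∀ (R : Fin n → Pref) (i : Fin n) (Ri' : Pref), Ri'.peak = (R i).peak →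
    (i ∈ S R ↔ i ∈ S (Function.update R i Ri'))) ∧
  (∀ R : Fin n → Pref, AgreeableCoalition Ω R Finset.univ → S R = Finset.univ)

/-- `φ` is an agreeable rule. -/
def IsAgreeableRule (Ω : ℝ) (φ : (Fin n → Pref) → Fin n → ℝ) : Prop :=
  ∃ S : (Fin n → Pref) → Finset (Fin n), AgreeableSelection Ω S ∧
    ∀ R i, φ R i = if i ∈ S R then (R i).peak else Ω / n

/-- A single-peaked-type preference with given peak `p ≥ 0`. -/
noncomputable def mkPref (p : ℝ) (hp : 0 ≤ p) : Pref where
  R x y := |x - p| ≤ |y - p|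
  total x y _ _ := le_total _ _
  trans x y z h1 h2 := le_trans h1 h2
  peak := p
  peak_nonneg := hp
  peak_max x _ := by simp [abs_nonneg]
  peak_unique x _ h := by
    have : |x - p| ≤ 0 := by simpa using h
    have := abs_nonpos_iff.mp this
    linarith [sub_eq_zero.mp this]

lemma coalition_sum_with_const {n : ℕ} (i : Fin n) (Ri : Pref) (c : ℝ) (hc : 0 ≤ c)
    (T : Finset (Fin n)) (hi : i ∈ T) :
    ∑ j ∈ T, ((Function.update (fun _ => mkPref c hc) i Ri) j).peak
      = Ri.peak + ((T.card : ℝ) - 1) * c := by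
  rw [← Finset.add_sum_erase _ _ hi]
  have h1 : (Function.update (fun _ => mkPref c hc) i Ri i).peak = Ri.peak := by
    simp [Function.update_self]
  rw [h1]
  congr 1
  have h2 : ∀ j ∈ T.erase i,
      ((Function.update (fun _ => mkPref c hc) i Ri) j).peak = c := by
    intro j hj
    have hji : j ≠ i := Finset.ne_of_mem_erase hj
    simp [Function.update_of_ne hji, mkPref]
  rw [Finset.sum_congr rfl h2, Finset.sum_const, Finset.card_erase_of_mem hi]
  have : 1 ≤ T.card := Finset.card_pos.mpr ⟨i, hi⟩
  rw [nsmul_eq_mul, Nat.cast_sub this]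
  push_cast
  ring

/-- the option set of any agent at an agreeable rule is
`{t(Rᵢ), Ω/n}` if `t(Rᵢ) ≤ Ω` and `{Ω/n}` otherwise. -/
theorem stmt_6 (n : ℕ) (hn : 2 ≤ n) (Ω : ℝ) (hΩ : 0 < Ω)
    (S : (Fin n → Pref) → Finset (Fin n)) (hS : AgreeableSelection Ω S)
    (φ : (Fin n → Pref) → Fin n → ℝ)
    (hφ : ∀ R i, φ R i = if i ∈ S R then (R i).peak else Ω / n) :
    ∀ (i : Fin n) (Ri : Pref),
      OptionSet φ i Ri =
        (if Ri.peak ≤ Ω then ({Ri.peak, Ω / n} : Set ℝ) else ({Ω / n} : Set ℝ)) := by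
  intro i Ri
  obtain ⟨hS1, hS2, hS3⟩ := hS
  have hn0 : (0:ℝ) < n := by positivity
  have hnn : (n:ℝ) ≠ 0 := ne_of_gt hn0
  -- membership of i in S R forces peak ≤ Ω
  have hub : ∀ R : Fin n → Pref, R i = Ri → i ∈ S R → Ri.peak ≤ Ω := by
    intro R hRi hi
    have hsum := hS1 R
    unfold AgreeableCoalition at hsum
    have h1 : Ri.peak ≤ ∑ j ∈ S R, (R j).peak := by
      rw [← hRi]
      exact Finset.single_le_sum (fun j _ => (R j).peak_nonneg) hi
    have h2 : ((S R).card : ℝ) / n * Ω ≤ Ω := by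
      have hcard : ((S R).card : ℝ) ≤ n := by
        exact_mod_cast (Finset.card_le_card (Finset.subset_univ _)).trans
          (le_of_eq (Finset.card_univ.trans (Fintype.card_fin n)))
      have : ((S R).card : ℝ) / n ≤ 1 := by
        rw [div_le_one hn0]; exact hcard
      nlinarith
    linarith [hsum ▸ h1]
  have hval : ∀ R : Fin n → Pref, R i = Ri → φ R i = Ri.peak ∨ φ R i = Ω / n := by
    intro R hRi
    rw [hφ]
    by_cases h : i ∈ S R
    · left; rw [if_pos h, hRi]
    · right; rw [if_neg h]
  -- Ω/n is always attainable
  have hEq : Ω / n ∈ OptionSet φ i Ri := by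
    set R : Fin n → Pref := Function.update (fun _ => mkPref (Ω/n) (by positivity)) i Ri with hR
    have hRi : R i = Ri := by rw [hR]; simp
    refine ⟨R, hRi, ?_⟩
    rw [hφ]
    by_cases h : i ∈ S R
    · rw [if_pos h, hRi]
      -- then the coalition sum forces Ri.peak = Ω/n
      have hsum := hS1 R
      unfold AgreeableCoalition at hsum
      rw [coalition_sum_with_const i Ri (Ω/n) (by positivity) (S R) h] at hsum
      have : Ri.peak = Ω / n := by
        field_simp at hsum ⊢
        nlinarith [hsum]
      exact this
    · rw [if_neg h]
  by_cases hle : Ri.peak ≤ Ω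
  · rw [if_pos hle]
    ext x
    constructor
    · rintro ⟨R, hRi, rfl⟩
      rcases hval R hRi with h | h <;> simp [h]
    · intro hx
      rcases hx with hx | hx
      · -- attain the peak via a unanimous-type profile
        have hc : 0 ≤ (Ω - Ri.peak) / (n - 1) := by
          have : (1:ℝ) ≤ n := by exact_mod_cast (by omega : 1 ≤ n)
          have h2 : (2:ℝ) ≤ n := by exact_mod_cast hn
          apply div_nonneg <;> linarith
        set R : Fin n → Pref :=
          Function.update (fun _ => mkPref ((Ω - Ri.peak)/(n-1)) hc) i Ri with hR
        have hRi : R i = Ri := by rw [hR]; simp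
        refine ⟨R, hRi, ?_⟩
        have huniv : AgreeableCoalition Ω R Finset.univ := by
          unfold AgreeableCoalition
          rw [coalition_sum_with_const i Ri _ hc Finset.univ (Finset.mem_univ i)]
          have hcard : ((Finset.univ : Finset (Fin n)).card : ℝ) = n := by
            simp
          rw [hcard]
          have h2 : (2:ℝ) ≤ n := by exact_mod_cast hn
          have hne : (n:ℝ) - 1 ≠ 0 := by linarith
          field_simp [hne]
          ring
        have := hS3 R huniv
        rw [hφ, this, if_pos (Finset.mem_univ i), hRi, hx]
      · simp only [Set.mem_singleton_iff] at hx
        rw [hx]; exact hEq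
  · rw [if_neg hle]
    ext x
    constructor
    · rintro ⟨R, hRi, rfl⟩
      have hni : i ∉ S R := fun h => hle (hub R hRi h)
      rw [hφ, if_neg hni]
      rfl
    · intro hx
      simp only [Set.mem_singleton_iff] at hx
      rw [hx]; exact hEq
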